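/- Let β, h, m, q₀, q₁, p₁ be real numbers with 0 ≤ q₀ ≤ q₁ and p₁ ≥ 0. Define H(u, v) = h + (β/2)(m − q₁) + √q₀ · u + √(q₁ − q₀) · v, ℓ(u,v) = 1/(1 + e^{−βH(u,v)}) ∈ [0,1], and for measurable g the nested tilted Gaussian averages ⟨g⟩_v(u) = ∫ φ(v) (1+e^{βH(u,v)})^{p₁} g(u,v) dv / ∫ φ(v) (1+e^{βH(u,v)})^{p₁} dv and ⟨f⟩_u = ∫ φ(u) f(u) du. Then ⟨⟨ℓ³⟩_v⟩_u ≥ ⟨⟨ℓ⁴⟩_v⟩_u and ⟨⟨ℓ⁴⟩_v⟩_u ≥ ⟨(⟨ℓ²⟩_v)²⟩_u; consequently the quantity p₁(⟨⟨ℓ⁴⟩_v⟩_u − ⟨(⟨ℓ²⟩_v)²⟩_u) + 4(⟨⟨ℓ³⟩_v⟩_u − ⟨⟨ℓ⁴⟩_v⟩_u) is nonnegative, so that the paper's Type-I stability condition, which is linear in the 2-RSB Parisi parameter x with this quantity as the coefficient of x, is most stringent at x = 1. -/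

import Mathlib

open MeasureTheory Real

/-- The standard Gaussian density `φ(t) = e^{-t²/2}/√(2π)` on `ℝ`. -/
noncomputable def gaussPDF (t : ℝ) : ℝ := Real.exp (-t ^ 2 / 2) / Real.sqrt (2 * Real.pi)

/-- The 1-RSB effective field `H(u,v) = h + (β/2)(m - q₁) + √q₀ u + √(q₁-q₀) v`. -/
noncomputable def Hfield (β h m q₀ q₁ : ℝ) (u v : ℝ) : ℝ :=
  h + β / 2 * (m - q₁) + Real.sqrt q₀ * u + Real.sqrt (q₁ - q₀) * v

/-- The logistic weight `ℓ(u,v) = 1/(1 + e^{-βH(u,v)}) ∈ [0,1]`. -/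
noncomputable def ellF (β h m q₀ q₁ : ℝ) (u v : ℝ) : ℝ :=
  1 / (1 + Real.exp (-(β * Hfield β h m q₀ q₁ u v)))

/-- Inner tilted Gaussian average
`⟨g⟩_v(u) = ∫ φ(v) (1+e^{βH})^{p₁} g(u,v) dv / ∫ φ(v) (1+e^{βH})^{p₁} dv`. -/
noncomputable def avgV (β h m q₀ q₁ p₁ : ℝ) (g : ℝ → ℝ → ℝ) (u : ℝ) : ℝ :=
  (∫ v : ℝ, gaussPDF v * (1 + Real.exp (β * Hfield β h m q₀ q₁ u v)) ^ p₁ * g u v) /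
  (∫ v : ℝ, gaussPDF v * (1 + Real.exp (β * Hfield β h m q₀ q₁ u v)) ^ p₁)

/-- Outer Gaussian average `⟨f⟩_u = ∫ φ(u) f(u) du`. -/
noncomputable def avgU (f : ℝ → ℝ) : ℝ := ∫ u : ℝ, gaussPDF u * f u

lemma gaussPDF_pos (t : ℝ) : 0 < gaussPDF t :=
  div_pos (Real.exp_pos _) (Real.sqrt_pos.2 (by positivity))

lemma continuous_gaussPDF : Continuous gaussPDF := by
  unfold gaussPDF; fun_prop

lemma integrable_gaussPDF_mul_exp (k : ℝ) :
    Integrable (fun v => gaussPDF v * Real.exp (k * v)) := by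
  have h1 : Integrable (fun v : ℝ => Real.exp (-(1/2 : ℝ) * v ^ 2)) :=
    integrable_exp_neg_mul_sq (by norm_num)
  have h2 : Integrable (fun v : ℝ => Real.exp (-(1/2 : ℝ) * (v - k) ^ 2)) :=
    h1.comp_sub_right k
  refine (h2.const_mul (Real.exp (k ^ 2 / 2) / Real.sqrt (2 * Real.pi))).congr
    (Filter.Eventually.of_forall fun v => ?_)
  simp only
  unfold gaussPDF
  rw [div_mul_eq_mul_div, div_mul_eq_mul_div, ← Real.exp_add, ← Real.exp_add]
  ring_nf

lemma integrable_gaussPDF : Integrable gaussPDF := by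
  simpa using integrable_gaussPDF_mul_exp 0

lemma one_add_exp_rpow_le {p : ℝ} (hp : 0 ≤ p) (x : ℝ) :
    (1 + Real.exp x) ^ p ≤ 2 ^ p * (Real.exp (p * x) + Real.exp (-(p * x))) := by
  have h1 : (1 : ℝ) + Real.exp x ≤ 2 * Real.exp |x| := by
    have a1 := Real.one_le_exp (abs_nonneg x)
    have a2 := Real.exp_le_exp.2 (le_abs_self x)
    linarith
  calc (1 + Real.exp x) ^ p ≤ (2 * Real.exp |x|) ^ p := by
        apply Real.rpow_le_rpow (by positivity) h1 hp
    _ = 2 ^ p * (Real.exp |x|) ^ p := Real.mul_rpow (by norm_num) (Real.exp_pos _).le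
    _ = 2 ^ p * Real.exp (p * |x|) := by rw [← Real.exp_mul, mul_comm |x| p]
    _ ≤ 2 ^ p * (Real.exp (p * x) + Real.exp (-(p * x))) := by
        have h2 : (0:ℝ) < 2 ^ p := by positivity
        rcases abs_cases x with ⟨he, _⟩ | ⟨he, _⟩
        · rw [he]; nlinarith [Real.exp_pos (-(p * x)), Real.exp_pos (p*x)]
        · rw [he, mul_neg]
          nlinarith [Real.exp_pos (p * x), Real.exp_pos (-(p*x))]

noncomputable def Wfun (β h m q₀ q₁ p₁ : ℝ) (u v : ℝ) : ℝ :=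
  gaussPDF v * (1 + Real.exp (β * Hfield β h m q₀ q₁ u v)) ^ p₁

section Aux
variable (β h m q₀ q₁ p₁ : ℝ)

lemma Wfun_pos (u v : ℝ) : 0 < Wfun β h m q₀ q₁ p₁ u v :=
  mul_pos (gaussPDF_pos v) (Real.rpow_pos_of_pos (by positivity) _)

lemma ellF_pos (u v : ℝ) : 0 < ellF β h m q₀ q₁ u v := by
  unfold ellF; positivity

lemma ellF_le_one (u v : ℝ) : ellF β h m q₀ q₁ u v ≤ 1 := by
  unfold ellF
  rw [div_le_one (by positivity)]
  linarith [Real.exp_pos (-(β * Hfield β h m q₀ q₁ u v))]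

lemma continuous_Hfield : Continuous fun p : ℝ × ℝ => Hfield β h m q₀ q₁ p.1 p.2 := by
  unfold Hfield; fun_prop

lemma continuous_ellF : Continuous fun p : ℝ × ℝ => ellF β h m q₀ q₁ p.1 p.2 := by
  unfold ellF Hfield
  apply Continuous.div continuous_const
  · fun_prop
  · intro p
    positivity

lemma integrable_gauss_exp_H (u s : ℝ) :
    Integrable (fun v => gaussPDF v * Real.exp (s * Hfield β h m q₀ q₁ u v)) := by
  have heq : (fun v => gaussPDF v * Real.exp (s * Hfield β h m q₀ q₁ u v))
      = fun v => Real.exp (s * (h + β / 2 * (m - q₁) + Real.sqrt q₀ * u)) *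
        (gaussPDF v * Real.exp ((s * Real.sqrt (q₁ - q₀)) * v)) := by
    funext v
    rw [show s * Hfield β h m q₀ q₁ u v
        = s * (h + β / 2 * (m - q₁) + Real.sqrt q₀ * u) + (s * Real.sqrt (q₁ - q₀)) * v from by
          unfold Hfield; ring, Real.exp_add]
    ring
  rw [heq]
  exact (integrable_gaussPDF_mul_exp _).const_mul _


variable (hp₁ : 0 ≤ p₁)
include hp₁

lemma continuous_Wfun : Continuous fun p : ℝ × ℝ => Wfun β h m q₀ q₁ p₁ p.1 p.2 := by
  unfold Wfun
  refine (continuous_gaussPDF.comp continuous_snd).mul ?_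
  refine Continuous.rpow_const ?_ (fun x => Or.inr hp₁)
  unfold Hfield; fun_prop

lemma integrable_Wfun (u : ℝ) : Integrable (fun v => Wfun β h m q₀ q₁ p₁ u v) := by
  have hg : Integrable (fun v => 2 ^ p₁ *
      (gaussPDF v * Real.exp ((p₁ * β) * Hfield β h m q₀ q₁ u v)
        + gaussPDF v * Real.exp ((-(p₁ * β)) * Hfield β h m q₀ q₁ u v))) :=
    ((integrable_gauss_exp_H β h m q₀ q₁ u (p₁ * β)).add
      (integrable_gauss_exp_H β h m q₀ q₁ u (-(p₁ * β)))).const_mul _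
  refine hg.mono' ?_ (Filter.Eventually.of_forall fun v => ?_)
  · exact ((continuous_Wfun β h m q₀ q₁ p₁ hp₁).comp
      (Continuous.prodMk_right u)).aestronglyMeasurable
  · rw [Real.norm_eq_abs, abs_of_nonneg (Wfun_pos β h m q₀ q₁ p₁ u v).le]
    have hb := one_add_exp_rpow_le hp₁ (β * Hfield β h m q₀ q₁ u v)
    have hkey := mul_le_mul_of_nonneg_left hb (gaussPDF_pos v).le
    calc Wfun β h m q₀ q₁ p₁ u v
        ≤ gaussPDF v * (2 ^ p₁ * (Real.exp (p₁ * (β * Hfield β h m q₀ q₁ u v))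
            + Real.exp (-(p₁ * (β * Hfield β h m q₀ q₁ u v))))) := hkey
      _ = 2 ^ p₁ * (gaussPDF v * Real.exp ((p₁ * β) * Hfield β h m q₀ q₁ u v)
            + gaussPDF v * Real.exp ((-(p₁ * β)) * Hfield β h m q₀ q₁ u v)) := by
          rw [show (p₁ * β) * Hfield β h m q₀ q₁ u v = p₁ * (β * Hfield β h m q₀ q₁ u v) from by ring,
            show (-(p₁ * β)) * Hfield β h m q₀ q₁ u v = -(p₁ * (β * Hfield β h m q₀ q₁ u v)) from by ring]
          ring

lemma integrable_WL (u : ℝ) (k : ℕ) :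
    Integrable (fun v => Wfun β h m q₀ q₁ p₁ u v * ellF β h m q₀ q₁ u v ^ k) := by
  refine (integrable_Wfun β h m q₀ q₁ p₁ hp₁ u).mono' ?_
    (Filter.Eventually.of_forall fun v => ?_)
  · exact (((continuous_Wfun β h m q₀ q₁ p₁ hp₁).mul
      ((continuous_ellF β h m q₀ q₁).pow k)).comp (Continuous.prodMk_right u)).aestronglyMeasurable
  · have h0 := Wfun_pos β h m q₀ q₁ p₁ u v
    have h1 := ellF_pos β h m q₀ q₁ u v
    have h2 := ellF_le_one β h m q₀ q₁ u v
    rw [Real.norm_eq_abs, abs_of_nonneg (by positivity)]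
    nlinarith [pow_le_one₀ h1.le h2 (n := k), pow_nonneg h1.le k]

lemma D_pos (u : ℝ) : 0 < ∫ v, Wfun β h m q₀ q₁ p₁ u v := by
  rw [integral_pos_iff_support_of_nonneg (fun v => (Wfun_pos β h m q₀ q₁ p₁ u v).le)
    (integrable_Wfun β h m q₀ q₁ p₁ hp₁ u)]
  have : Function.support (fun v => Wfun β h m q₀ q₁ p₁ u v) = Set.univ :=
    Set.eq_univ_of_forall fun v => (Wfun_pos β h m q₀ q₁ p₁ u v).ne'
  simp [this]

end Aux

section B1
variable (β h m q₀ q₁ p₁ : ℝ) (hp₁ : 0 ≤ p₁)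
include hp₁

omit hp₁ in
lemma avgV_pow_eq (k : ℕ) (u : ℝ) :
    avgV β h m q₀ q₁ p₁ (fun u v => ellF β h m q₀ q₁ u v ^ k) u
      = (∫ v, Wfun β h m q₀ q₁ p₁ u v * ellF β h m q₀ q₁ u v ^ k)
        / (∫ v, Wfun β h m q₀ q₁ p₁ u v) := rfl

lemma avgV_pow_nonneg (k : ℕ) (u : ℝ) :
    0 ≤ avgV β h m q₀ q₁ p₁ (fun u v => ellF β h m q₀ q₁ u v ^ k) u := by
  rw [avgV_pow_eq β h m q₀ q₁ p₁]
  apply div_nonneg _ (D_pos β h m q₀ q₁ p₁ hp₁ u).le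
  exact integral_nonneg fun v => by
    have := Wfun_pos β h m q₀ q₁ p₁ u v
    have := ellF_pos β h m q₀ q₁ u v
    positivity

lemma avgV_pow_le_one (k : ℕ) (u : ℝ) :
    avgV β h m q₀ q₁ p₁ (fun u v => ellF β h m q₀ q₁ u v ^ k) u ≤ 1 := by
  rw [avgV_pow_eq β h m q₀ q₁ p₁, div_le_one (D_pos β h m q₀ q₁ p₁ hp₁ u)]
  refine integral_mono (integrable_WL β h m q₀ q₁ p₁ hp₁ u k) (integrable_Wfun β h m q₀ q₁ p₁ hp₁ u)
    fun v => ?_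
  have h0 := (Wfun_pos β h m q₀ q₁ p₁ u v).le
  have h1 := (ellF_pos β h m q₀ q₁ u v).le
  have h2 := ellF_le_one β h m q₀ q₁ u v
  nlinarith [pow_le_one₀ h1 h2 (n := k)]

lemma avgV_mono34 (u : ℝ) :
    avgV β h m q₀ q₁ p₁ (fun u v => ellF β h m q₀ q₁ u v ^ 4) u
      ≤ avgV β h m q₀ q₁ p₁ (fun u v => ellF β h m q₀ q₁ u v ^ 3) u := by
  rw [avgV_pow_eq β h m q₀ q₁ p₁, avgV_pow_eq β h m q₀ q₁ p₁,
    div_le_div_iff_of_pos_right (D_pos β h m q₀ q₁ p₁ hp₁ u)]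
  refine integral_mono (integrable_WL β h m q₀ q₁ p₁ hp₁ u 4) (integrable_WL β h m q₀ q₁ p₁ hp₁ u 3)
    fun v => ?_
  have h0 := (Wfun_pos β h m q₀ q₁ p₁ u v).le
  have h1 := (ellF_pos β h m q₀ q₁ u v).le
  have h2 := ellF_le_one β h m q₀ q₁ u v
  have h3 : ellF β h m q₀ q₁ u v ^ 4 ≤ ellF β h m q₀ q₁ u v ^ 3 :=
    pow_le_pow_of_le_one h1 h2 (by norm_num)
  exact mul_le_mul_of_nonneg_left h3 h0

lemma avgV_sq_le (u : ℝ) :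
    (avgV β h m q₀ q₁ p₁ (fun u v => ellF β h m q₀ q₁ u v ^ 2) u) ^ 2
      ≤ avgV β h m q₀ q₁ p₁ (fun u v => ellF β h m q₀ q₁ u v ^ 4) u := by
  rw [avgV_pow_eq β h m q₀ q₁ p₁, avgV_pow_eq β h m q₀ q₁ p₁]
  set D := ∫ v, Wfun β h m q₀ q₁ p₁ u v with hDdef
  set N2 := ∫ v, Wfun β h m q₀ q₁ p₁ u v * ellF β h m q₀ q₁ u v ^ 2 with hN2
  set N4 := ∫ v, Wfun β h m q₀ q₁ p₁ u v * ellF β h m q₀ q₁ u v ^ 4 with hN4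
  have hD : 0 < D := D_pos β h m q₀ q₁ p₁ hp₁ u
  set r : ℝ := N2 / D with hr
  have hvar : 0 ≤ ∫ v, Wfun β h m q₀ q₁ p₁ u v * (ellF β h m q₀ q₁ u v ^ 2 - r) ^ 2 :=
    integral_nonneg fun v => by
      have := (Wfun_pos β h m q₀ q₁ p₁ u v).le; positivity
  have hexp : (∫ v, Wfun β h m q₀ q₁ p₁ u v * (ellF β h m q₀ q₁ u v ^ 2 - r) ^ 2)
      = N4 - 2 * r * N2 + r ^ 2 * D := by
    have heq : (fun v => Wfun β h m q₀ q₁ p₁ u v * (ellF β h m q₀ q₁ u v ^ 2 - r) ^ 2)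
        = fun v => (Wfun β h m q₀ q₁ p₁ u v * ellF β h m q₀ q₁ u v ^ 4
            - (2 * r) * (Wfun β h m q₀ q₁ p₁ u v * ellF β h m q₀ q₁ u v ^ 2))
            + r ^ 2 * Wfun β h m q₀ q₁ p₁ u v := by
      funext v; ring
    have hsub : Integrable (fun v => Wfun β h m q₀ q₁ p₁ u v * ellF β h m q₀ q₁ u v ^ 4
        - 2 * r * (Wfun β h m q₀ q₁ p₁ u v * ellF β h m q₀ q₁ u v ^ 2)) := by
      exact (integrable_WL β h m q₀ q₁ p₁ hp₁ u 4).sub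
        ((integrable_WL β h m q₀ q₁ p₁ hp₁ u 2).const_mul (2 * r))
    rw [heq, integral_add hsub ((integrable_Wfun β h m q₀ q₁ p₁ hp₁ u).const_mul _),
      integral_sub (integrable_WL β h m q₀ q₁ p₁ hp₁ u 4)
        ((integrable_WL β h m q₀ q₁ p₁ hp₁ u 2).const_mul _),
      integral_const_mul, integral_const_mul]
  rw [hexp] at hvar
  have key : N2 ^ 2 ≤ N4 * D := by
    have h1 : 0 ≤ (N4 - 2 * r * N2 + r ^ 2 * D) * D := mul_nonneg hvar hD.le
    have h2 : (N4 - 2 * r * N2 + r ^ 2 * D) * D = N4 * D - N2 ^ 2 := by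
      rw [hr]; field_simp; ring
    nlinarith
  rw [div_pow, div_le_div_iff₀ (by positivity) hD]
  nlinarith

end B1

lemma integrable_gauss_mul {f : ℝ → ℝ} (hm : AEStronglyMeasurable f volume)
    (h0 : ∀ u, 0 ≤ f u) (h1 : ∀ u, f u ≤ 1) :
    Integrable (fun u => gaussPDF u * f u) := by
  refine integrable_gaussPDF.mono' (continuous_gaussPDF.aestronglyMeasurable.mul hm)
    (Filter.Eventually.of_forall fun u => ?_)
  rw [Real.norm_eq_abs, abs_of_nonneg (mul_nonneg (gaussPDF_pos u).le (h0 u))]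
  nlinarith [gaussPDF_pos u, h0 u, h1 u]

section B2
variable (β h m q₀ q₁ p₁ : ℝ) (hp₁ : 0 ≤ p₁)
include hp₁

lemma sm_avgV (k : ℕ) :
    StronglyMeasurable (fun u => avgV β h m q₀ q₁ p₁ (fun u v => ellF β h m q₀ q₁ u v ^ k) u) := by
  have hfun : (fun u => avgV β h m q₀ q₁ p₁ (fun u v => ellF β h m q₀ q₁ u v ^ k) u)
      = fun u => (∫ v, Wfun β h m q₀ q₁ p₁ u v * ellF β h m q₀ q₁ u v ^ k)
        / (∫ v, Wfun β h m q₀ q₁ p₁ u v) := by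
    funext u; exact avgV_pow_eq β h m q₀ q₁ p₁ k u
  rw [hfun]
  have hnum : StronglyMeasurable
      (fun u => ∫ v, Wfun β h m q₀ q₁ p₁ u v * ellF β h m q₀ q₁ u v ^ k) := by
    have hc : Continuous (fun p : ℝ × ℝ => Wfun β h m q₀ q₁ p₁ p.1 p.2
        * ellF β h m q₀ q₁ p.1 p.2 ^ k) :=
      (continuous_Wfun β h m q₀ q₁ p₁ hp₁).mul ((continuous_ellF β h m q₀ q₁).pow k)
    exact hc.stronglyMeasurable.integral_prod_right'
  have hden : StronglyMeasurable (fun u => ∫ v, Wfun β h m q₀ q₁ p₁ u v) :=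
    (continuous_Wfun β h m q₀ q₁ p₁ hp₁).stronglyMeasurable.integral_prod_right'
  exact (hnum.measurable.div hden.measurable).stronglyMeasurable


end B2

set_option maxHeartbeats 800000 in
/-- Monotonicity inequalities for the nested 1-RSB tilted averages:
`⟨⟨ℓ³⟩_v⟩_u ≥ ⟨⟨ℓ⁴⟩_v⟩_u` and `⟨⟨ℓ⁴⟩_v⟩_u ≥ ⟨(⟨ℓ²⟩_v)²⟩_u`; hence the coefficient
`p₁(⟨⟨ℓ⁴⟩_v⟩_u − ⟨(⟨ℓ²⟩_v)²⟩_u) + 4(⟨⟨ℓ³⟩_v⟩_u − ⟨⟨ℓ⁴⟩_v⟩_u)` of the 2-RSB Parisi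
parameter `x` in the Type-I stability condition is nonnegative, so the condition is
most stringent at `x = 1`. -/
theorem typeI_stability_coefficient_nonneg (β h m q₀ q₁ p₁ : ℝ)
    (hq₀ : 0 ≤ q₀) (hq₀₁ : q₀ ≤ q₁) (hp₁ : 0 ≤ p₁) :
    avgU (avgV β h m q₀ q₁ p₁ (fun u v => (ellF β h m q₀ q₁ u v) ^ 3))
        ≥ avgU (avgV β h m q₀ q₁ p₁ (fun u v => (ellF β h m q₀ q₁ u v) ^ 4)) ∧
    avgU (avgV β h m q₀ q₁ p₁ (fun u v => (ellF β h m q₀ q₁ u v) ^ 4))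
        ≥ avgU (fun u => (avgV β h m q₀ q₁ p₁ (fun u v => (ellF β h m q₀ q₁ u v) ^ 2) u) ^ 2) ∧
    0 ≤ p₁ * (avgU (avgV β h m q₀ q₁ p₁ (fun u v => (ellF β h m q₀ q₁ u v) ^ 4))
            - avgU (fun u =>
                (avgV β h m q₀ q₁ p₁ (fun u v => (ellF β h m q₀ q₁ u v) ^ 2) u) ^ 2))
        + 4 * (avgU (avgV β h m q₀ q₁ p₁ (fun u v => (ellF β h m q₀ q₁ u v) ^ 3))
            - avgU (avgV β h m q₀ q₁ p₁ (fun u v => (ellF β h m q₀ q₁ u v) ^ 4))) := by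

  have hint : ∀ k : ℕ, Integrable (fun u => gaussPDF u *
      avgV β h m q₀ q₁ p₁ (fun u v => ellF β h m q₀ q₁ u v ^ k) u) := fun k =>
    integrable_gauss_mul (sm_avgV β h m q₀ q₁ p₁ hp₁ k).aestronglyMeasurable
      (avgV_pow_nonneg β h m q₀ q₁ p₁ hp₁ k) (avgV_pow_le_one β h m q₀ q₁ p₁ hp₁ k)
  have hintsq : Integrable (fun u => gaussPDF u *
      (avgV β h m q₀ q₁ p₁ (fun u v => ellF β h m q₀ q₁ u v ^ 2) u) ^ 2) := by
    refine integrable_gauss_mul (((sm_avgV β h m q₀ q₁ p₁ hp₁ 2).pow 2).aestronglyMeasurable)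
      (fun u => sq_nonneg _) (fun u => ?_)
    have h0 := avgV_pow_nonneg β h m q₀ q₁ p₁ hp₁ 2 u
    have h1 := avgV_pow_le_one β h m q₀ q₁ p₁ hp₁ 2 u
    nlinarith
  have key1 : avgU (avgV β h m q₀ q₁ p₁ (fun u v => (ellF β h m q₀ q₁ u v) ^ 4))
      ≤ avgU (avgV β h m q₀ q₁ p₁ (fun u v => (ellF β h m q₀ q₁ u v) ^ 3)) := by
    refine integral_mono (hint 4) (hint 3) fun u => ?_
    exact mul_le_mul_of_nonneg_left (avgV_mono34 β h m q₀ q₁ p₁ hp₁ u) (gaussPDF_pos u).le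
  have key2 : avgU (fun u => (avgV β h m q₀ q₁ p₁ (fun u v => (ellF β h m q₀ q₁ u v) ^ 2) u) ^ 2)
      ≤ avgU (avgV β h m q₀ q₁ p₁ (fun u v => (ellF β h m q₀ q₁ u v) ^ 4)) := by
    refine integral_mono hintsq (hint 4) fun u => ?_
    exact mul_le_mul_of_nonneg_left (avgV_sq_le β h m q₀ q₁ p₁ hp₁ u) (gaussPDF_pos u).le
  refine ⟨key1, key2, ?_⟩
  have h1 := mul_nonneg hp₁ (sub_nonneg.2 key2)
  nlinarith
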